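/- Let W be a group, χ an automorphism of W with χ ∘ χ = id, and M, K normal subgroups of finite index in W. Let g₁ = gcd([M : M ∩ χ(M)], [W : K]). Then [M : M ∩ χ(M)] / g₁ divides [M ∩ K : (M ∩ K) ∩ χ(M ∩ K)]. -/

import Mathlib

/-- Arithmetic helper: if `b ≠ 0`, `a ∣ e * f`, and `e ∣ b`, then `a / gcd a b ∣ f`. -/
lemma stmt_8_nat_aux {a b e f : ℕ} (hb : b ≠ 0) (haef : a ∣ e * f) (heb : e ∣ b) :
    a / Nat.gcd a b ∣ f := by
  have he : e ≠ 0 := fun h => hb (by simpa [h] using heb)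
  set g := Nat.gcd a e with hg
  have hgpos : 0 < g := Nat.gcd_pos_of_pos_right a (Nat.pos_of_ne_zero he)
  have hgab : g ∣ Nat.gcd a b := Nat.dvd_gcd (Nat.gcd_dvd_left a e) ((Nat.gcd_dvd_right a e).trans heb)
  have h1 : a / Nat.gcd a b ∣ a / g := by
    rcases hgab with ⟨k, hk⟩
    rcases Nat.gcd_dvd_left a b with ⟨m, hm⟩
    have hgb : 0 < Nat.gcd a b := Nat.gcd_pos_of_pos_right a (Nat.pos_of_ne_zero hb)
    have hag : a / g = k * m := by
      have : a = g * (k * m) := by rw [hm, hk]; ring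
      rw [this, Nat.mul_div_cancel_left _ hgpos]
    have hab : a / Nat.gcd a b = m :=
      Nat.div_eq_of_eq_mul_right hgb hm
    refine ⟨k, ?_⟩
    rw [hag, hab, Nat.mul_comm]
  have h2 : a / g ∣ f := by
    have hco : Nat.Coprime (a / g) (e / g) := Nat.coprime_div_gcd_div_gcd hgpos
    have hdvd : a / g ∣ (e / g) * f := by
      rcases haef with ⟨t, ht⟩
      refine ⟨t, ?_⟩
      apply Nat.eq_of_mul_eq_mul_left hgpos
      calc g * (e / g * f) = (g * (e / g)) * f := by ring
        _ = e * f := by rw [Nat.mul_div_cancel' (Nat.gcd_dvd_right a e)]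
        _ = a * t := ht
        _ = (g * (a / g)) * t := by rw [Nat.mul_div_cancel' (Nat.gcd_dvd_left a e)]
        _ = g * (a / g * t) := by ring
    exact Nat.Coprime.dvd_of_dvd_mul_left hco hdvd
  exact h1.trans h2

/-- Lower bound on the chirality group of the mix: with `g₁ = gcd([M : M ∩ χ(M)], [W : K])`,
the number `[M : M ∩ χ(M)] / g₁` divides `[M ∩ K : (M ∩ K) ∩ χ(M ∩ K)]`. -/
theorem stmt_8 {W : Type*} [Group W] (χ : W ≃* W) (hχ : ∀ w, χ (χ w) = w)
    (M K : Subgroup W) [M.Normal] [K.Normal] [M.FiniteIndex] [K.FiniteIndex] :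
    (M.map χ.toMonoidHom).relIndex M / Nat.gcd ((M.map χ.toMonoidHom).relIndex M) K.index ∣
      ((M ⊓ K).map χ.toMonoidHom).relIndex (M ⊓ K) := by
  set χM := M.map χ.toMonoidHom with hχM
  set χK := K.map χ.toMonoidHom with hχK
  have hmap : (M ⊓ K).map χ.toMonoidHom = χM ⊓ χK :=
    Subgroup.map_inf M K χ.toMonoidHom χ.injective
  set a := χM.relIndex M with ha
  set e := K.relIndex M with he
  set f := χM.relIndex (M ⊓ K) with hf
  -- Chain 1 : χM ⊓ M ⊓ K ≤ χM ⊓ M ≤ M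
  have eq1 : K.relIndex (χM ⊓ M) * a = (χM ⊓ M ⊓ K).relIndex M := by
    have h := Subgroup.relIndex_mul_relIndex (χM ⊓ M ⊓ K) (χM ⊓ M) M inf_le_left inf_le_right
    rwa [Subgroup.inf_relIndex_left, Subgroup.inf_relIndex_right] at h
  -- Chain 2 : χM ⊓ (M ⊓ K) ≤ M ⊓ K ≤ M
  have eq2 : f * e = (χM ⊓ M ⊓ K).relIndex M := by
    have h := Subgroup.relIndex_mul_relIndex (χM ⊓ (M ⊓ K)) (M ⊓ K) M inf_le_right inf_le_left
    rw [Subgroup.inf_relIndex_right, Subgroup.inf_relIndex_left, ← inf_assoc] at h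
    exact h
  have haef : a ∣ e * f := by
    refine ⟨K.relIndex (χM ⊓ M), ?_⟩
    rw [Nat.mul_comm e f, eq2, ← eq1, Nat.mul_comm]
  have heb : e ∣ K.index := Subgroup.relIndex_dvd_index_of_normal K M
  have hb : K.index ≠ 0 := Subgroup.FiniteIndex.index_ne_zero
  have key : a / Nat.gcd a K.index ∣ f := stmt_8_nat_aux hb haef heb
  -- f divides the target
  have hfc : f ∣ ((M ⊓ K).map χ.toMonoidHom).relIndex (M ⊓ K) := by
    rw [hmap]
    have h := Subgroup.relIndex_mul_relIndex (χM ⊓ χK ⊓ (M ⊓ K)) (χM ⊓ (M ⊓ K)) (M ⊓ K)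
      (le_inf ((inf_le_left : χM ⊓ χK ⊓ (M ⊓ K) ≤ χM ⊓ χK).trans inf_le_left) inf_le_right)
      inf_le_right
    simp only [Subgroup.inf_relIndex_right] at h
    exact ⟨_, by rw [← h, Nat.mul_comm]⟩
  exact key.trans hfc
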